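/- Let W be a right separating point of M. If δ : A → M is linear with δ(I) = 0 and satisfies δ(W) = Aδ(B)* + δ(A)B* whenever AB* = W, then δ is a Jordan derivation. -/
import Mathlib


open MulOpposite

private lemma aux_inv {A : Type*} [NormedRing A] [NormedAlgebra ℂ A] [CompleteSpace A]
    (a : A) (s : ℝ) (hs : ‖a‖ < s) :
    ∃ v : A, (((s : ℂ)) • 1 + a) * v = 1 ∧ v * (((s : ℂ)) • 1 + a) = 1 := by
  have hs0 : (0:ℝ) < s := lt_of_le_of_lt (norm_nonneg a) hs
  have hrne : ((s:ℂ)) ≠ 0 := by exact_mod_cast hs0.ne'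
  have hnorm : ‖-((s:ℂ)⁻¹ • a)‖ < 1 := by
    rw [norm_neg, norm_smul, norm_inv, Complex.norm_real, Real.norm_eq_abs,
      abs_of_pos hs0]
    have h := mul_lt_mul_of_pos_left hs (inv_pos.mpr hs0)
    rwa [inv_mul_cancel₀ hs0.ne'] at h
  set w : Aˣ := Units.oneSub (-((s:ℂ)⁻¹ • a)) hnorm with hw
  have hwval : (w : A) = 1 + (s:ℂ)⁻¹ • a := by
    rw [hw, Units.val_oneSub, sub_neg_eq_add]
  have hkey : ((s:ℂ)) • (w : A) = ((s:ℂ)) • 1 + a := by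
    rw [hwval, smul_add, smul_smul, mul_inv_cancel₀ hrne, one_smul]
  refine ⟨(s:ℂ)⁻¹ • ((w⁻¹ : Aˣ) : A), ?_, ?_⟩
  · rw [← hkey, smul_mul_assoc, mul_smul_comm, smul_smul, mul_inv_cancel₀ hrne,
      one_smul, Units.mul_inv]
  · rw [← hkey, smul_mul_assoc, mul_smul_comm, smul_smul, inv_mul_cancel₀ hrne,
      one_smul, Units.inv_mul]

/-- If `W` is a right separating point of `M`, `δ(I) = 0`, and
`δ(W) = A δ(B)* + δ(A) B*` whenever `A B* = W`, then `δ` is a Jordan derivation. -/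
theorem stmt6 {A : Type*} {M : Type*}
    [NormedRing A] [NormedAlgebra ℂ A] [CompleteSpace A] [StarRing A]
    [AddCommGroup M] [Module ℂ M] [Module A M] [Module Aᵐᵒᵖ M]
    [SMulCommClass A Aᵐᵒᵖ M] [IsScalarTower ℂ A M] [IsScalarTower ℂ Aᵐᵒᵖ M]
    [StarAddMonoid M]
    (hstar_left : ∀ (a : A) (m : M), star (a • m) = op (star a) • star m)
    (hstar_right : ∀ (a : A) (m : M), star (op a • m) = star a • star m)
    (W : A) (hW : ∀ m : M, op W • m = 0 → m = 0)
    (δ : A →ₗ[ℂ] M) (hI : δ 1 = 0)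
    (hδ : ∀ a b : A, a * star b = W → δ W = a • star (δ b) + op (star b) • δ a) :
    ∀ a : A, δ (a * a) = op a • δ a + a • δ a := by
  intro a
  obtain ⟨v, huv, hvu⟩ := aux_inv a (‖a‖ + 1) (by linarith)
  obtain ⟨v', huv', hvu'⟩ := aux_inv a (‖a‖ + 2) (by linarith)
  set r : ℂ := ((‖a‖ + 1 : ℝ) : ℂ) with hr
  set u : A := ((‖a‖ + 1 : ℝ) : ℂ) • 1 + a with hu
  set u' : A := ((‖a‖ + 2 : ℝ) : ℂ) • 1 + a with hu'
  clear_value r u u'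
  -- basic algebra of the two units
  have hu'u : u' = u + 1 := by
    rw [hu, hu']
    have h2 : ((‖a‖ + 2 : ℝ) : ℂ) = ((‖a‖ + 1 : ℝ) : ℂ) + 1 := by push_cast; ring
    rw [h2, add_smul, one_smul]
    abel
  have hcomm : u * u' = u' * u := by
    rw [hu'u, mul_add, add_mul, mul_one, one_mul]
  have hc1 : u' * v = v * u' := by
    rw [hu'u, add_mul, mul_add, huv, hvu, one_mul, mul_one]
  have e1 : (u * u') * v = u' := by
    rw [mul_assoc, hc1, ← mul_assoc, huv, one_mul]
  have h1 : (u * u') * (v * v') = 1 := by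
    rw [← mul_assoc, e1, huv']
  have e2 : v * (u * u') = u' := by
    rw [← mul_assoc, hvu, one_mul]
  have e3 : v' * (u * u') = u := by
    rw [hcomm, ← mul_assoc, hvu', one_mul]
  have hbig : (v * v') * (u * u') = 1 := by
    rw [mul_assoc, e3, hvu]
  have h5 : v - v' = v * v' := by
    have a1 : (v * u') * v' = v := by rw [mul_assoc, huv', mul_one]
    have a2 : (v * u) * v' = v' := by rw [hvu, one_mul]
    calc v - v' = (v * u') * v' - (v * u) * v' := by rw [a1, a2]
      _ = (v * (u' - u)) * v' := by rw [mul_sub, sub_mul]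
      _ = v * v' := by rw [hu'u, add_sub_cancel_left, mul_one]
  -- values of δ on the units
  have hδu : δ u = δ a := by
    rw [hu, map_add, map_smul, hI, smul_zero, zero_add]
  have hδu' : δ u' = δ a := by
    rw [hu'u, map_add, hI, add_zero, hδu]
  have huu' : u * u' = (r * (r + 1)) • (1 : A) + (2 * r + 1) • a + a * a := by
    rw [hu'u, hu, hr]
    simp only [mul_add, add_mul, mul_one, one_mul, smul_mul_assoc, mul_smul_comm,
      smul_smul]
    module
  have hδuu' : δ (u * u') = (2 * r + 1) • δ a + δ (a * a) := by
    rw [huu', map_add, map_add, map_smul, map_smul, hI, smul_zero, zero_add]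
  -- the three instances of the hypothesis hδ
  have Eq1 : δ W = u • star (δ (star (v * W))) + op (v * W) • δ a := by
    have h := hδ u (star (v * W)) (by rw [star_star, ← mul_assoc, huv, one_mul])
    rwa [star_star, hδu] at h
  have Eq2 : δ W = u' • star (δ (star (v' * W))) + op (v' * W) • δ a := by
    have h := hδ u' (star (v' * W)) (by rw [star_star, ← mul_assoc, huv', one_mul])
    rwa [star_star, hδu'] at h
  have Eq3 : δ W = (u * u') • star (δ (star ((v * v') * W))) +
      op ((v * v') * W) • ((2 * r + 1) • δ a + δ (a * a)) := by
    have h := hδ (u * u') (star ((v * v') * W))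
      (by rw [star_star, ← mul_assoc, h1, one_mul])
    rwa [star_star, hδuu'] at h
  set d : M := δ a with hd
  set X : M := star (δ (star (v * W))) with hX
  set X' : M := star (δ (star (v' * W))) with hX'
  clear_value d X X'
  have hY : X - X' = star (δ (star ((v * v') * W))) := by
    rw [hX, hX', ← star_sub, ← map_sub, ← star_sub, ← sub_mul, h5]
  -- solve Eq1, Eq2 for u•X and u'•X'
  have keyX : u • X = δ W - op (v * W) • d := by rw [Eq1]; abel
  have keyX' : u' • X' = δ W - op (v' * W) • d := by rw [Eq2]; abel
  have c1 : (u * u') • X = u' • δ W - op W • (op v • (u' • d)) := by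
    rw [hcomm, mul_smul, keyX, smul_sub]
    congr 1
    rw [op_mul, mul_smul (op W) (op v) d, smul_comm u' (op W), smul_comm u' (op v)]
  have c2 : (u * u') • X' = u • δ W - op W • (op v' • (u • d)) := by
    rw [mul_smul, keyX', smul_sub]
    congr 1
    rw [op_mul, mul_smul (op W) (op v') d, smul_comm u (op W), smul_comm u (op v')]
  have hsub : u' • δ W - u • δ W = δ W := by
    rw [← sub_smul, hu'u, add_sub_cancel_left, one_smul]
  -- rewrite Eq3 and separate
  have E3 : δ W = (u * u') • (X - X') +
      op W • (op (v * v') • ((2 * r + 1) • d + δ (a * a))) := by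
    have h := Eq3
    rw [← hY, op_mul, mul_smul (op W) (op (v * v'))] at h
    exact h
  rw [smul_sub, c1, c2] at E3
  have e5 : (u' • δ W - op W • (op v • (u' • d))) - (u • δ W - op W • (op v' • (u • d)))
      + op W • (op (v * v') • ((2 * r + 1) • d + δ (a * a)))
      = (u' • δ W - u • δ W) - op W • (op v • (u' • d)) + op W • (op v' • (u • d))
      + op W • (op (v * v') • ((2 * r + 1) • d + δ (a * a))) := by abel
  have E3' := E3.trans e5
  rw [hsub] at E3'
  have h4 : (op W • (op v • (u' • d)) - op W • (op v' • (u • d)))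
      - op W • (op (v * v') • ((2 * r + 1) • d + δ (a * a)))
      = δ W - (δ W - op W • (op v • (u' • d)) + op W • (op v' • (u • d))
        + op W • (op (v * v') • ((2 * r + 1) • d + δ (a * a)))) := by abel
  rw [← E3', sub_self] at h4
  have key := sub_eq_zero.mp h4
  have hZ : op (v * v') • ((2 * r + 1) • d + δ (a * a))
      = op v • (u' • d) - op v' • (u • d) := by
    have h0 : op W • (op (v * v') • ((2 * r + 1) • d + δ (a * a))
        - (op v • (u' • d) - op v' • (u • d))) = 0 := by
      rw [smul_sub, smul_sub]
      exact sub_eq_zero.mpr key.symm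
    have h6 := hW _ h0
    exact sub_eq_zero.mp h6
  -- apply op (u * u') to hZ
  have happ := congrArg (fun m : M => op (u * u') • m) hZ
  simp only [smul_sub] at happ
  rw [← mul_smul, ← op_mul, hbig, op_one, one_smul] at happ
  rw [← mul_smul, ← op_mul, e2] at happ
  rw [← mul_smul, ← op_mul, e3] at happ
  rw [← smul_comm u' (op u') d, ← smul_comm u (op u) d] at happ
  -- expand the right hand side
  have hud : u • d = r • d + a • d := by
    rw [hu, add_smul, smul_assoc, one_smul, hr]
  have hopud : op u • d = r • d + op a • d := by
    rw [hu, op_add, op_smul, op_one, add_smul, smul_assoc, one_smul, hr]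
  have hu'm : ∀ m : M, u' • m = u • m + m := by
    intro m; rw [hu'u, add_smul, one_smul]
  have hopu'd : op u' • d = op u • d + d := by
    rw [hu'u, op_add, op_one, add_smul, one_smul]
  have hsc3 : (2 * r + 1 : ℂ) • d = r • d + r • d + d := by
    have h7 : (2 * r + 1 : ℂ) = r + r + 1 := by ring
    rw [h7, add_smul, add_smul, one_smul]
  have step1 : u' • (op u' • d) - u • (op u • d) = u • d + op u • d + d := by
    rw [hopu'd, hu'm, smul_add]
    abel
  have step2 : u • d + op u • d + d = (2 * r + 1) • d + (op a • d + a • d) := by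
    rw [hud, hopud, hsc3]
    abel
  have hfinal := happ.trans (step1.trans step2)
  exact add_left_cancel hfinal
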